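/- Second-order asymptotic of the ratio of Gamma functions with a common large parameter: for fixed real numbers a and b, as n → ∞ (n ranging over the natural numbers), Γ(a+n)/Γ(b+n) - n^{a-b}·(1 + (a-b)(a+b-1)/(2n)) = O(n^{a-b-2}); that is, there exist a constant M > 0 and N₀ such that for all n ≥ N₀, |Γ(a+n)/Γ(b+n) - n^{a-b}(1 + (a-b)(a+b-1)/(2n))| ≤ M·n^{a-b-2}. -/

import Mathlib

open Real Filter Topology Finset Nat

lemma myGamma_prod {x : ℝ} (hx : 0 < x) (n : ℕ) :
    Real.Gamma (x + n) = Real.Gamma x * ∏ j ∈ Finset.range n, (x + j) := by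
  induction n with
  | zero => simp
  | succ n ih =>
    have h : x + n ≠ 0 := by positivity
    push_cast
    rw [show x + (n + 1 : ℝ) = (x + n) + 1 by ring, Real.Gamma_add_one h, ih,
      Finset.prod_range_succ]
    ring

lemma tendsto_r_pos {a b : ℝ} (ha : 0 < a) (hb : 0 < b) :
    Tendsto (fun n : ℕ => Real.Gamma (a + n) / Real.Gamma (b + n) * (n : ℝ) ^ (b - a))
      atTop (𝓝 1) := by
  have hGa : Real.Gamma a ≠ 0 := (Real.Gamma_pos_of_pos ha).ne'
  have hGb : Real.Gamma b ≠ 0 := (Real.Gamma_pos_of_pos hb).ne'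
  have h1 : Tendsto (fun n : ℕ => (b + (n:ℝ)) / (a + n)) atTop (𝓝 1) := by
    have : Tendsto (fun n : ℕ => 1 + (b - a) / (a + n)) atTop (𝓝 (1 + 0)) := by
      refine tendsto_const_nhds.add (Tendsto.div_atTop tendsto_const_nhds ?_)
      exact tendsto_atTop_add_const_left _ _ tendsto_natCast_atTop_atTop
    rw [add_zero] at this
    refine this.congr' ?_
    filter_upwards [eventually_gt_atTop 0] with n hn
    have : (0:ℝ) < a + n := by positivity
    field_simp
    ring
  have h2 : Tendsto (fun n : ℕ => Real.GammaSeq b n / Real.GammaSeq a n) atTop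
      (𝓝 (Real.Gamma b / Real.Gamma a)) :=
    (Real.GammaSeq_tendsto_Gamma b).div (Real.GammaSeq_tendsto_Gamma a) hGa
  have hL := (h1.mul h2).const_mul (Real.Gamma a / Real.Gamma b)
  have he : Real.Gamma a / Real.Gamma b * (1 * (Real.Gamma b / Real.Gamma a)) = 1 := by
    field_simp
  rw [he] at hL
  refine hL.congr' ?_
  filter_upwards [eventually_gt_atTop 0] with n hn
  have hn0 : (0:ℝ) < n := by exact_mod_cast hn
  have hprodA : (0:ℝ) < ∏ j ∈ Finset.range n, (a + j) :=
    Finset.prod_pos fun j _ => by positivity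
  have hprodB : (0:ℝ) < ∏ j ∈ Finset.range n, (b + j) :=
    Finset.prod_pos fun j _ => by positivity
  have hGSa : Real.GammaSeq a n
      = (n : ℝ) ^ a * (n ! : ℝ) / ((∏ j ∈ Finset.range n, (a + j)) * (a + n)) := by
    rw [Real.GammaSeq, Finset.prod_range_succ]
  have hGSb : Real.GammaSeq b n
      = (n : ℝ) ^ b * (n ! : ℝ) / ((∏ j ∈ Finset.range n, (b + j)) * (b + n)) := by
    rw [Real.GammaSeq, Finset.prod_range_succ]
  rw [hGSa, hGSb, myGamma_prod ha, myGamma_prod hb]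
  have hfact : (0:ℝ) < (n ! : ℝ) := by positivity
  have hna : (0:ℝ) < (n:ℝ) ^ a := Real.rpow_pos_of_pos hn0 a
  have hnb : (0:ℝ) < (n:ℝ) ^ b := Real.rpow_pos_of_pos hn0 b
  have hnba : (n:ℝ) ^ (b - a) = (n:ℝ) ^ b / (n:ℝ) ^ a := Real.rpow_sub hn0 b a
  have han : (0:ℝ) < a + n := by positivity
  have hbn : (0:ℝ) < b + n := by positivity
  rw [hnba]
  field_simp

lemma log_taylor3 {x : ℝ} (hx : |x| ≤ 1/2) : |Real.log (1+x) - x + x^2/2| ≤ 2 * |x|^3 := by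
  have h : |(-x)| < 1 := by rw [abs_neg]; linarith
  have h2 := Real.abs_log_sub_add_sum_range_le h 2
  simp only [Finset.sum_range_succ, Finset.sum_range_zero] at h2
  have e1 : (1 : ℝ) - -x = 1 + x := by ring
  rw [e1] at h2
  have habs : |(-x)| = |x| := abs_neg x
  rw [habs] at h2
  have h3 : |Real.log (1+x) - x + x^2/2| ≤ |x|^3 / (1 - |x|) := by
    convert h2 using 2
    push_cast
    ring
  have h4 : |x|^3 / (1 - |x|) ≤ 2 * |x|^3 := by
    rw [div_le_iff₀ (by linarith)]
    nlinarith [abs_nonneg x, pow_nonneg (abs_nonneg x) 3]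
  linarith

lemma tendsto_r (a b : ℝ) :
    Tendsto (fun n : ℕ => Real.Gamma (a + n) / Real.Gamma (b + n) * (n : ℝ) ^ (b - a))
      atTop (𝓝 1) := by
  obtain ⟨N, hN⟩ := exists_nat_gt (max (-a) (-b))
  have ha' : 0 < a + N := by have := le_max_left (-a) (-b); linarith
  have hb' : 0 < b + N := by have := le_max_right (-a) (-b); linarith
  rw [← Filter.tendsto_add_atTop_iff_nat N]
  have hmain := tendsto_r_pos ha' hb'
  have hcorr : Tendsto (fun n : ℕ => (((n:ℝ) + N) / n) ^ (b - a)) atTop (𝓝 1) := by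
    have h0 : Tendsto (fun n : ℕ => ((n:ℝ) + N) / n) atTop (𝓝 1) := by
      have : Tendsto (fun n : ℕ => 1 + (N:ℝ) / n) atTop (𝓝 (1 + 0)) :=
        tendsto_const_nhds.add (Tendsto.div_atTop tendsto_const_nhds tendsto_natCast_atTop_atTop)
      rw [add_zero] at this
      refine this.congr' ?_
      filter_upwards [eventually_gt_atTop 0] with n hn
      have : (0:ℝ) < n := by exact_mod_cast hn
      field_simp
    have := h0.rpow_const (p := b - a) (Or.inl one_ne_zero)
    rwa [Real.one_rpow] at this
  have := hmain.mul hcorr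
  rw [mul_one] at this
  refine this.congr' ?_
  filter_upwards [eventually_gt_atTop 0] with n hn
  have hn0 : (0:ℝ) < n := by exact_mod_cast hn
  have e1 : a + (N:ℝ) + n = a + ((n + N : ℕ) : ℝ) := by push_cast; ring
  have e2 : b + (N:ℝ) + n = b + ((n + N : ℕ) : ℝ) := by push_cast; ring
  have e3 : (b + (N:ℝ)) - (a + N) = b - a := by ring
  rw [e1, e2, e3]
  have e4 : (((n + N : ℕ) : ℝ)) ^ (b - a) = (n:ℝ) ^ (b - a) * (((n:ℝ) + N) / n) ^ (b - a) := by
    rw [← Real.mul_rpow (le_of_lt hn0) (by positivity)]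
    congr 1
    field_simp
    exact Nat.cast_add _ _
  rw [mul_assoc, ← e4]

noncomputable def vv (a b : ℝ) (n : ℕ) : ℝ :=
  Real.log (Real.Gamma (a + n)) - Real.log (Real.Gamma (b + n)) + (b - a) * Real.log n


lemma tendsto_vv (a b : ℝ) : Tendsto (vv a b) atTop (𝓝 0) := by
  have h := (tendsto_r a b).log one_ne_zero
  rw [Real.log_one] at h
  refine h.congr' ?_
  obtain ⟨N, hN⟩ := exists_nat_gt (max (-a) (-b))
  filter_upwards [eventually_gt_atTop N, eventually_gt_atTop 0] with n hn hn0
  have hn0' : (0:ℝ) < n := by exact_mod_cast hn0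
  have hnN : (N:ℝ) < n := by exact_mod_cast hn
  have ha : 0 < a + n := by have := le_max_left (-a) (-b); linarith
  have hb : 0 < b + n := by have := le_max_right (-a) (-b); linarith
  have hGa : 0 < Real.Gamma (a + n) := Real.Gamma_pos_of_pos ha
  have hGb : 0 < Real.Gamma (b + n) := Real.Gamma_pos_of_pos hb
  rw [Real.log_mul (by positivity) (by positivity), Real.log_div hGa.ne' hGb.ne',
    Real.log_rpow hn0', vv]

lemma vv_diff {a b : ℝ} {n : ℕ} (ha : 0 < a + n) (hb : 0 < b + n) (hn : 0 < n) :
    vv a b (n + 1) - vv a b n =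
      Real.log (1 + a / n) - Real.log (1 + b / n) - (a - b) * Real.log (1 + 1 / n) := by
  have hn0 : (0:ℝ) < n := by exact_mod_cast hn
  have hGa : 0 < Real.Gamma (a + n) := Real.Gamma_pos_of_pos ha
  have hGb : 0 < Real.Gamma (b + n) := Real.Gamma_pos_of_pos hb
  have hpa : (0:ℝ) < 1 + a / n := by
    have e : 1 + a / (n:ℝ) = (a + n) / n := by field_simp; ring
    rw [e]; positivity
  have hpb : (0:ℝ) < 1 + b / n := by
    have e : 1 + b / (n:ℝ) = (b + n) / n := by field_simp; ring
    rw [e]; positivity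
  have hga : Real.Gamma (a + ((n:ℝ) + 1)) = (a + n) * Real.Gamma (a + n) := by
    rw [show a + ((n:ℝ) + 1) = (a + n) + 1 by ring, Real.Gamma_add_one ha.ne']
  have hgb : Real.Gamma (b + ((n:ℝ) + 1)) = (b + n) * Real.Gamma (b + n) := by
    rw [show b + ((n:ℝ) + 1) = (b + n) + 1 by ring, Real.Gamma_add_one hb.ne']
  have l1 : Real.log (a + n) = Real.log n + Real.log (1 + a / n) := by
    rw [← Real.log_mul hn0.ne' hpa.ne']
    congr 1
    field_simp
    ring
  have l2 : Real.log (b + n) = Real.log n + Real.log (1 + b / n) := by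
    rw [← Real.log_mul hn0.ne' hpb.ne']
    congr 1
    field_simp
    ring
  have l3 : Real.log ((n:ℝ) + 1) = Real.log n + Real.log (1 + 1 / n) := by
    rw [← Real.log_mul hn0.ne' (by positivity)]
    congr 1
    field_simp
  simp only [vv, Nat.cast_add, Nat.cast_one]
  rw [hga, hgb, Real.log_mul ha.ne' hGa.ne', Real.log_mul hb.ne' hGb.ne', l1, l2, l3]
  ring



noncomputable def cc (a b : ℝ) : ℝ := (a - b) * (a + b - 1) / 2
noncomputable def KK (a b : ℝ) : ℝ := 2*|a|^3 + 2*|b|^3 + 2*|a-b| + |cc a b| + 1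

lemma cube_le {x : ℝ} (hx : 0 < x) : x^3 ≤ x^2*(x+1) := by nlinarith [sq_nonneg x]

lemma KK_pos (a b : ℝ) : 0 < KK a b := by
  have := abs_nonneg a; have := abs_nonneg b; have := abs_nonneg (a-b)
  have := abs_nonneg (cc a b)
  have : 0 ≤ |a|^3 := by positivity
  have : 0 ≤ |b|^3 := by positivity
  unfold KK; positivity

set_option maxHeartbeats 1000000 in
lemma step_est (a b : ℝ) : ∃ N₁ : ℕ, ∀ n : ℕ, N₁ ≤ n →
    |vv a b (n+1) - vv a b n + cc a b / n - cc a b / ((n:ℝ)+1)| ≤ KK a b / (n:ℝ)^3 := by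
  obtain ⟨N₁, hN₁⟩ := exists_nat_gt (2*|a| + 2*|b| + 2)
  refine ⟨N₁, fun n hn => ?_⟩
  have hxN : 2*|a| + 2*|b| + 2 ≤ (n:ℝ) := le_trans hN₁.le (by exact_mod_cast hn)
  have hxa : 2*|a| ≤ (n:ℝ) := by have := abs_nonneg b; linarith
  have hxb : 2*|b| ≤ (n:ℝ) := by have := abs_nonneg a; linarith
  have hx2 : (2:ℝ) ≤ (n:ℝ) := by have := abs_nonneg a; have := abs_nonneg b; linarith
  have hxpos : (0:ℝ) < n := by linarith
  have hnpos : 0 < n := by exact_mod_cast hxpos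
  have ha : 0 < a + (n:ℝ) := by have := neg_abs_le a; linarith
  have hb : 0 < b + (n:ℝ) := by have := neg_abs_le b; linarith
  have hax : |a / (n:ℝ)| ≤ 1/2 := by
    rw [abs_div, abs_of_pos hxpos, div_le_iff₀ hxpos]; linarith
  have hbx : |b / (n:ℝ)| ≤ 1/2 := by
    rw [abs_div, abs_of_pos hxpos, div_le_iff₀ hxpos]; linarith
  have h1x : |1 / (n:ℝ)| ≤ 1/2 := by
    rw [abs_div, abs_one, abs_of_pos hxpos, div_le_iff₀ hxpos]; linarith
  have hA := log_taylor3 hax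
  have hB := log_taylor3 hbx
  have hC := log_taylor3 h1x
  have key : vv a b (n+1) - vv a b n + cc a b / n - cc a b / ((n:ℝ)+1)
      = (Real.log (1 + a/(n:ℝ)) - a/n + (a/(n:ℝ))^2/2)
        - (Real.log (1 + b/(n:ℝ)) - b/n + (b/(n:ℝ))^2/2)
        - (a-b) * (Real.log (1 + 1/(n:ℝ)) - 1/n + (1/(n:ℝ))^2/2)
        - cc a b / ((n:ℝ)^2*((n:ℝ)+1)) := by
    rw [vv_diff ha hb hnpos]
    have hx1 : ((n:ℝ)+1) ≠ 0 := by positivity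
    unfold cc
    field_simp
    ring
  rw [key]
  set x : ℝ := (n:ℝ) with hxdef
  set A := Real.log (1 + a/x) - a/x + (a/x)^2/2 with hAdef
  set B := Real.log (1 + b/x) - b/x + (b/x)^2/2 with hBdef
  set C := Real.log (1 + 1/x) - 1/x + (1/x)^2/2 with hCdef
  have hDabs : |cc a b / (x^2*(x+1))| = |cc a b| / (x^2*(x+1)) := by
    rw [abs_div, abs_of_pos (show (0:ℝ) < x^2*(x+1) by positivity)]
  have tri1 : |A - B - (a-b)*C - cc a b / (x^2*(x+1))|
      ≤ |A| + |B| + |a-b| * |C| + |cc a b| / (x^2*(x+1)) := by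
    have h1 : |A - B - (a-b)*C - cc a b / (x^2*(x+1))|
        ≤ |A - B - (a-b)*C| + |cc a b / (x^2*(x+1))| := abs_sub _ _
    have h2 : |A - B - (a-b)*C| ≤ |A - B| + |(a-b)*C| := abs_sub _ _
    have h3 : |A - B| ≤ |A| + |B| := abs_sub _ _
    rw [abs_mul] at h2
    rw [hDabs] at h1
    linarith
  refine le_trans tri1 ?_
  have e1 : |a/x|^3 = |a|^3/x^3 := by rw [abs_div, abs_of_pos hxpos, div_pow]
  have e2 : |b/x|^3 = |b|^3/x^3 := by rw [abs_div, abs_of_pos hxpos, div_pow]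
  have e3 : |1/x|^3 = 1/x^3 := by rw [abs_div, abs_one, abs_of_pos hxpos, div_pow, one_pow]
  have e4 : |cc a b| / (x^2*(x+1)) ≤ |cc a b| / x^3 := by
    rw [div_le_div_iff₀ (by positivity) (by positivity)]
    have hx3 : x^3 ≤ x^2*(x+1) := cube_le hxpos
    exact mul_le_mul_of_nonneg_left hx3 (abs_nonneg _)
  have hsum : 2*(|a|^3/x^3) + 2*(|b|^3/x^3) + |a-b| * (2*(1/x^3)) + |cc a b| / x^3
      = (2*|a|^3 + 2*|b|^3 + 2*|a-b| + |cc a b|)/x^3 := by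
    field_simp
  have hfin : (2*|a|^3 + 2*|b|^3 + 2*|a-b| + |cc a b|)/x^3 ≤ KK a b / x^3 := by
    have hnum : 2*|a|^3 + 2*|b|^3 + 2*|a-b| + |cc a b| ≤ KK a b := by rw [KK]; linarith
    exact div_le_div_of_nonneg_right hnum (by positivity)
  calc |A| + |B| + |a-b| * |C| + |cc a b| / (x^2*(x+1))
      ≤ 2*|a/x|^3 + 2*|b/x|^3 + |a-b| * (2*|1/x|^3) + |cc a b| / x^3 :=
        add_le_add (add_le_add (add_le_add hA hB)
          (mul_le_mul_of_nonneg_left hC (abs_nonneg _))) e4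
    _ = 2*(|a|^3/x^3) + 2*(|b|^3/x^3) + |a-b| * (2*(1/x^3)) + |cc a b| / x^3 := by
        rw [e1, e2, e3]
    _ = (2*|a|^3 + 2*|b|^3 + 2*|a-b| + |cc a b|)/x^3 := hsum
    _ ≤ KK a b / x^3 := hfin


lemma aux_cube {y : ℝ} (hy : 2 ≤ y) :
    1/y^3 ≤ 1/(2*(y-1)*y) - 1/(2*y*(y+1)) := by
  have h1 : (0:ℝ) < y - 1 := by linarith
  have h2 : (0:ℝ) < y := by linarith
  rw [div_sub_div _ _ (by positivity) (by positivity), div_le_div_iff₀ (by positivity) (by positivity)]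
  nlinarith [sq_nonneg y, pow_pos h2 2, pow_pos h2 3]

lemma sum_cube_bound {n : ℕ} (hn : 2 ≤ n) : ∀ m : ℕ, n ≤ m →
    ∑ k ∈ Finset.Ico n m, 1/(k:ℝ)^3 ≤ 1/(2*((n:ℝ)-1)*n) - 1/(2*((m:ℝ)-1)*m) := by
  intro m hm
  induction m, hm using Nat.le_induction with
  | base => simp
  | succ m hm ih =>
    rw [Finset.sum_Ico_succ_top hm]
    have hm2 : (2:ℝ) ≤ (m:ℝ) := by exact_mod_cast le_trans hn hm
    have := aux_cube hm2
    push_cast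
    push_cast at ih
    rw [show (2*((m:ℝ)+1-1)*((m:ℝ)+1)) = 2*(m:ℝ)*((m:ℝ)+1) from by ring]
    linarith

lemma w_bound (a b : ℝ) : ∃ N₂ : ℕ, 2 ≤ N₂ ∧ ∀ n : ℕ, N₂ ≤ n →
    |vv a b n - cc a b / n| ≤ KK a b / (n:ℝ)^2 := by
  obtain ⟨N₁, hN₁⟩ := step_est a b
  set K := KK a b with hK
  have hKpos := KK_pos a b
  set w : ℕ → ℝ := fun k => vv a b k - cc a b / k with hw
  refine ⟨max N₁ 2, le_max_right _ _, fun n hn => ?_⟩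
  have hn2 : 2 ≤ n := le_trans (le_max_right _ _) hn
  have hnN₁ : N₁ ≤ n := le_trans (le_max_left _ _) hn
  have hn2' : (2:ℝ) ≤ (n:ℝ) := by exact_mod_cast hn2
  have hnpos : (0:ℝ) < n := by linarith
  have hw0 : Tendsto w atTop (𝓝 0) := by
    have h1 : Tendsto (fun k : ℕ => cc a b / (k:ℝ)) atTop (𝓝 0) :=
      Tendsto.div_atTop tendsto_const_nhds tendsto_natCast_atTop_atTop
    have := (tendsto_vv a b).sub h1
    rwa [sub_zero] at this
  have claim : ∀ m : ℕ, n ≤ m → |w n - w m| ≤ K * ∑ k ∈ Finset.Ico n m, 1/(k:ℝ)^3 := by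
    intro m hm
    induction m, hm using Nat.le_induction with
    | base => simp
    | succ m hm ih =>
      have hstep : |w (m+1) - w m| ≤ K / (m:ℝ)^3 := by
        have h := hN₁ m (le_trans hnN₁ hm)
        have e : w (m+1) - w m = vv a b (m+1) - vv a b m + cc a b / m - cc a b / ((m:ℝ)+1) := by
          simp only [hw]
          push_cast
          ring
        rw [e]
        exact h
      have tri : |w n - w (m+1)| ≤ |w n - w m| + |w (m+1) - w m| := by
        have := abs_sub (w n - w m) (w (m+1) - w m)
        have e : w n - w m - (w (m+1) - w m) = w n - w (m+1) := by ring
        rw [e] at this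
        linarith [this, abs_abs (w (m+1) - w m)]
      rw [Finset.sum_Ico_succ_top hm, mul_add]
      have : K * (1/(m:ℝ)^3) = K / (m:ℝ)^3 := by ring
      rw [this]
      linarith
  have hlim : Tendsto (fun m => |w n - w m|) atTop (𝓝 |w n|) := by
    have := (tendsto_const_nhds : Tendsto (fun _ : ℕ => w n) atTop (𝓝 (w n))).sub hw0
    rw [sub_zero] at this
    exact this.abs
  have hbound : |w n| ≤ K * (1/(2*((n:ℝ)-1)*n)) := by
    refine le_of_tendsto hlim ?_
    filter_upwards [eventually_ge_atTop n] with m hm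
    refine le_trans (claim m hm) ?_
    have hm2 : (2:ℝ) ≤ (m:ℝ) := by exact_mod_cast le_trans hn2 hm
    have hsum := sum_cube_bound hn2 m hm
    have hmpos : (0:ℝ) < 2*((m:ℝ)-1)*m := by nlinarith
    have : ∑ k ∈ Finset.Ico n m, 1/(k:ℝ)^3 ≤ 1/(2*((n:ℝ)-1)*n) := by
      have : (0:ℝ) < 1/(2*((m:ℝ)-1)*m) := by positivity
      linarith
    exact mul_le_mul_of_nonneg_left this hKpos.le
  refine le_trans hbound ?_
  have h1 : K * (1/(2*((n:ℝ)-1)*n)) = K / (2*((n:ℝ)-1)*n) := by ring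
  rw [h1]
  apply div_le_div_of_nonneg_left hKpos.le (by positivity)
  nlinarith


/-- Second-order asymptotic of the ratio of Gamma functions with a common large
parameter: for fixed real `a`, `b`, as `n → ∞`,
`Γ(a+n)/Γ(b+n) - n^{a-b}(1 + (a-b)(a+b-1)/(2n)) = O(n^{a-b-2})`. -/
theorem gamma_ratio_asymptotic (a b : ℝ) :
    ∃ M > (0:ℝ), ∃ N₀ : ℕ, ∀ n : ℕ, N₀ ≤ n →
      |Real.Gamma (a + n) / Real.Gamma (b + n) -
          (n : ℝ) ^ (a - b) * (1 + (a - b) * (a + b - 1) / (2 * n))| ≤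
        M * (n : ℝ) ^ (a - b - 2) := by
  set K := KK a b with hKdef
  have hKpos := KK_pos a b
  set c := cc a b with hcdef
  obtain ⟨N₂, hN₂2, hN₂⟩ := w_bound a b
  have habs : Tendsto (fun n => |vv a b n|) atTop (𝓝 0) := by
    have := (tendsto_vv a b).abs; rwa [abs_zero] at this
  have hev : ∀ᶠ n : ℕ in atTop, |vv a b n| ≤ 1 := by
    filter_upwards [habs.eventually_lt_const (by norm_num : (0:ℝ) < 1)] with n h using h.le
  obtain ⟨N₃, hN₃⟩ := eventually_atTop.mp hev
  obtain ⟨N₄, hN₄⟩ := exists_nat_gt (max (-a) (-b))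
  refine ⟨(K + |c|)^2 + K + 1, by positivity, max (max N₂ N₃) (max N₄ 1), fun n hn => ?_⟩
  have hn2 : N₂ ≤ n := le_trans (le_trans (le_max_left _ _) (le_max_left _ _)) hn
  have hn3 : N₃ ≤ n := le_trans (le_trans (le_max_right _ _) (le_max_left _ _)) hn
  have hn4 : N₄ ≤ n := le_trans (le_trans (le_max_left _ _) (le_max_right _ _)) hn
  have hn1 : 1 ≤ n := le_trans (le_trans (le_max_right _ _) (le_max_right _ _)) hn
  have hnpos : (0:ℝ) < n := by exact_mod_cast hn1
  have hn1' : (1:ℝ) ≤ n := by exact_mod_cast hn1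
  have hN4n : (N₄:ℝ) ≤ n := by exact_mod_cast hn4
  have hapos : 0 < a + (n:ℝ) := by have := le_max_left (-a) (-b); linarith
  have hbpos : 0 < b + (n:ℝ) := by have := le_max_right (-a) (-b); linarith
  have hGa : 0 < Real.Gamma (a + n) := Real.Gamma_pos_of_pos hapos
  have hGb : 0 < Real.Gamma (b + n) := Real.Gamma_pos_of_pos hbpos
  -- Γ(a+n)/Γ(b+n) = n^(a-b) * exp (vv a b n)
  have hlog : Real.log (Real.Gamma (a+n) / Real.Gamma (b+n) * (n:ℝ)^(b-a)) = vv a b n := by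
    rw [Real.log_mul (by positivity) (by positivity), Real.log_div hGa.ne' hGb.ne',
      Real.log_rpow hnpos, vv]
  have hrpos : 0 < Real.Gamma (a+n) / Real.Gamma (b+n) * (n:ℝ)^(b-a) := by positivity
  have hexp : Real.Gamma (a+n) / Real.Gamma (b+n) = (n:ℝ)^(a-b) * Real.exp (vv a b n) := by
    rw [← hlog, Real.exp_log hrpos,
      show (n:ℝ)^(a-b) * (Real.Gamma (a+n)/Real.Gamma (b+n) * (n:ℝ)^(b-a))
        = ((n:ℝ)^(a-b) * (n:ℝ)^(b-a)) * (Real.Gamma (a+n)/Real.Gamma (b+n)) from by ring,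
      ← Real.rpow_add hnpos]
    norm_num
  -- rewrite target
  have hterm : (a - b) * (a + b - 1) / (2 * (n:ℝ)) = c / n := by
    rw [hcdef, cc]; ring
  rw [hexp, hterm]
  have hfact : (n:ℝ)^(a-b) * Real.exp (vv a b n) - (n:ℝ)^(a-b) * (1 + c/n)
      = (n:ℝ)^(a-b) * (Real.exp (vv a b n) - 1 - c/n) := by ring
  rw [hfact, abs_mul, abs_of_pos (Real.rpow_pos_of_pos hnpos _)]
  -- inner bound
  set t := vv a b n with htdef
  have hwb : |t - c/n| ≤ K / (n:ℝ)^2 := hN₂ n hn2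
  have ht1 : |t| ≤ 1 := hN₃ n hn3
  have he1 : |Real.exp t - 1 - t| ≤ t^2 := Real.abs_exp_sub_one_sub_id_le ht1
  have htb : |t| ≤ (K + |c|) / n := by
    have h1 : |t| ≤ |t - c/n| + |c/n| := by
      have := abs_add_le (t - c/n) (c/n)
      simpa using this
    have h2 : |c/(n:ℝ)| = |c|/n := by rw [abs_div, abs_of_pos hnpos]
    have h3 : K/(n:ℝ)^2 ≤ K/n := by
      apply div_le_div_of_nonneg_left hKpos.le hnpos
      nlinarith
    rw [h2] at h1
    have : |t| ≤ K/n + |c|/n := by linarith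
    rw [← add_div] at this
    exact this
  have ht2 : t^2 ≤ (K + |c|)^2 / (n:ℝ)^2 := by
    have := sq_abs t
    have h4 : |t|^2 ≤ ((K + |c|)/n)^2 := by
      apply pow_le_pow_left₀ (abs_nonneg t) htb
    rw [div_pow] at h4
    linarith
  have hinner : |Real.exp t - 1 - c/n| ≤ ((K + |c|)^2 + K + 1) / (n:ℝ)^2 := by
    have e : Real.exp t - 1 - c/n = (Real.exp t - 1 - t) + (t - c/n) := by ring
    have hpos2 : (0:ℝ) < (n:ℝ)^2 := by positivity
    have h5 : |Real.exp t - 1 - c/n| ≤ t^2 + K/(n:ℝ)^2 := by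
      rw [e]
      exact le_trans (abs_add_le _ _) (add_le_add he1 hwb)
    refine le_trans h5 ?_
    have expand : ((K + |c|)^2 + K + 1) / (n:ℝ)^2
        = (K + |c|)^2/(n:ℝ)^2 + K/(n:ℝ)^2 + 1/(n:ℝ)^2 := by ring
    rw [expand]
    have h1n : (0:ℝ) ≤ 1/(n:ℝ)^2 := by positivity
    linarith
  calc (n:ℝ)^(a-b) * |Real.exp t - 1 - c/n|
      ≤ (n:ℝ)^(a-b) * (((K + |c|)^2 + K + 1) / (n:ℝ)^2) := by
        exact mul_le_mul_of_nonneg_left hinner (Real.rpow_pos_of_pos hnpos _).le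
    _ = ((K + |c|)^2 + K + 1) * (n:ℝ)^(a-b-2) := by
        rw [show a - b - 2 = (a-b) + (-2) by ring, Real.rpow_add hnpos,
          show ((-2:ℝ)) = -((2:ℕ):ℝ) by norm_num, Real.rpow_neg hnpos.le, Real.rpow_natCast]
        ring
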